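/- Let X be a reflexive real Banach space and T : X ⇉ X* a maximal monotone operator. Then T is non-enlargeable (T^ε = T for all ε ≥ 0) if and only if there exist a self-cancelling set A ⊂ X × X* and a point (x, x*) ∈ X × X* such that A^⊢ is maximal monotone and T = A^⊢ + {(x, x*)}. -/

import Mathlib

/-- A subset of `X × X*` is monotone if `⟨x - y, x* - y*⟩ ≥ 0` for all its pairs of points. -/
def IsMonotoneSet {X : Type*} [NormedAddCommGroup X] [NormedSpace ℝ X]
    (T : Set (X × (X →L[ℝ] ℝ))) : Prop :=
  ∀ p ∈ T, ∀ q ∈ T, 0 ≤ (p.2 - q.2) (p.1 - q.1)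

/-- A subset of `X × X*` is maximal monotone if it is monotone and maximal with respect
to inclusion among monotone subsets. -/
def IsMaximalMonotone {X : Type*} [NormedAddCommGroup X] [NormedSpace ℝ X]
    (T : Set (X × (X →L[ℝ] ℝ))) : Prop :=
  IsMonotoneSet T ∧ ∀ S, IsMonotoneSet S → T ⊆ S → S = T

/-- The ε-enlargement of `T : X ⇉ X*`. -/
def enlargement {X : Type*} [NormedAddCommGroup X] [NormedSpace ℝ X]
    (T : Set (X × (X →L[ℝ] ℝ))) (ε : ℝ) : Set (X × (X →L[ℝ] ℝ)) :=
  {p | ∀ q ∈ T, (p.2 - q.2) (p.1 - q.1) ≥ -ε}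

/-- `B^⊢ = {(y, y*) : ⟨x, y*⟩ + ⟨y, x*⟩ = 0 for all (x, x*) ∈ B}`. -/
def vdash {X : Type*} [NormedAddCommGroup X] [NormedSpace ℝ X]
    (B : Set (X × (X →L[ℝ] ℝ))) : Set (X × (X →L[ℝ] ℝ)) :=
  {q | ∀ p ∈ B, p.2 q.1 + q.2 p.1 = 0}

/-- `A ⊆ X × X*` is self-cancelling if it is a linear subspace of `X × X*` and the
duality product vanishes on it. -/
def IsSelfCancelling {X : Type*} [NormedAddCommGroup X] [NormedSpace ℝ X]
    (A : Set (X × (X →L[ℝ] ℝ))) : Prop :=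
  (∃ S : Submodule ℝ (X × (X →L[ℝ] ℝ)), A = ↑S) ∧ ∀ p ∈ A, p.2 p.1 = 0

section proofs
variable {X : Type*} [NormedAddCommGroup X] [NormedSpace ℝ X]

private lemma pair_swap (p q : X × (X →L[ℝ] ℝ)) :
    (p.2 - q.2) (p.1 - q.1) = (q.2 - p.2) (q.1 - p.1) := by
  simp only [ContinuousLinearMap.sub_apply, map_sub]
  ring

lemma mem_of_related {T : Set (X × (X →L[ℝ] ℝ))} (hT : IsMaximalMonotone T)
    {r : X × (X →L[ℝ] ℝ)} (h : ∀ q ∈ T, 0 ≤ (r.2 - q.2) (r.1 - q.1)) : r ∈ T := by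
  have hmono : IsMonotoneSet (insert r T) := by
    intro p hp q hq
    rcases Set.mem_insert_iff.1 hp with hp' | hp' <;>
      rcases Set.mem_insert_iff.1 hq with hq' | hq'
    · rw [hp', hq']; simp
    · rw [hp']; exact h q hq'
    · rw [hq', pair_swap]; exact h p hp'
    · exact hT.1 p hp' q hq'
  have he := hT.2 _ hmono (Set.subset_insert _ _)
  exact he ▸ Set.mem_insert _ _

lemma isClosed_of_max {T : Set (X × (X →L[ℝ] ℝ))} (hT : IsMaximalMonotone T) :
    IsClosed T := by
  have h1 : Continuous fun z : (X × (X →L[ℝ] ℝ)) × (X × (X →L[ℝ] ℝ)) =>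
      ((z.1.2 - z.2.2, z.1.1 - z.2.1) : (X →L[ℝ] ℝ) × X) :=
    (continuous_fst.snd.sub continuous_snd.snd).prodMk
      (continuous_fst.fst.sub continuous_snd.fst)
  have hcont : Continuous fun z : (X × (X →L[ℝ] ℝ)) × (X × (X →L[ℝ] ℝ)) =>
      (z.1.2 - z.2.2) (z.1.1 - z.2.1) :=
    isBoundedBilinearMap_apply.continuous.comp h1
  have hmono : IsMonotoneSet (closure T) := by
    intro p hp q hq
    have hcl : ((p, q) : _ × _) ∈ closure (T ×ˢ T) := by
      rw [closure_prod_eq]; exact ⟨hp, hq⟩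
    have hsub : closure (T ×ˢ T) ⊆ {z | 0 ≤ (z.1.2 - z.2.2) (z.1.1 - z.2.1)} := by
      apply closure_minimal
      · rintro ⟨a, b⟩ ⟨ha, hb⟩
        exact hT.1 a ha b hb
      · exact isClosed_le continuous_const hcont
    exact hsub hcl
  have he := hT.2 _ hmono subset_closure
  rw [← he]
  exact isClosed_closure

lemma midpoint_mem {T : Set (X × (X →L[ℝ] ℝ))} (hT : IsMaximalMonotone T)
    (hE : ∀ ε : ℝ, 0 ≤ ε → enlargement T ε = T) {p q : X × (X →L[ℝ] ℝ)}
    (hp : p ∈ T) (hq : q ∈ T) : (2⁻¹ : ℝ) • (p + q) ∈ T := by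
  have hc : 0 ≤ (p.2 - q.2) (p.1 - q.1) := hT.1 p hp q hq
  rw [← hE ((p.2 - q.2) (p.1 - q.1) / 4) (by linarith)]
  intro s hs
  have h1 := hT.1 p hp s hs
  have h2 := hT.1 q hq s hs
  simp only [ContinuousLinearMap.sub_apply, ContinuousLinearMap.add_apply,
    ContinuousLinearMap.smul_apply, Prod.smul_snd, Prod.smul_fst, Prod.fst_add, Prod.snd_add,
    map_sub, map_add, map_smul, smul_eq_mul, ge_iff_le] at h1 h2 ⊢
  nlinarith [h1, h2]

lemma reflect_mem {T : Set (X × (X →L[ℝ] ℝ))} (hT : IsMaximalMonotone T)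
    (hE : ∀ ε : ℝ, 0 ≤ ε → enlargement T ε = T) {p q : X × (X →L[ℝ] ℝ)}
    (hp : p ∈ T) (hq : q ∈ T) : p + p - q ∈ T := by
  apply mem_of_related hT
  intro s hs
  have hm := midpoint_mem hT hE hq hs
  have h := hT.1 p hp _ hm
  simp only [ContinuousLinearMap.sub_apply, ContinuousLinearMap.add_apply,
    ContinuousLinearMap.smul_apply, Prod.smul_snd, Prod.smul_fst, Prod.fst_add, Prod.snd_add,
    Prod.fst_sub, Prod.snd_sub, map_sub, map_add, map_smul, smul_eq_mul] at h ⊢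
  nlinarith [h]

noncomputable def vdashSubmodule (B : Set (X × (X →L[ℝ] ℝ))) :
    Submodule ℝ (X × (X →L[ℝ] ℝ)) where
  carrier := vdash B
  add_mem' := by
    intro a b ha hb
    intro p hp
    have h1 := ha p hp
    have h2 := hb p hp
    simp only [Prod.fst_add, Prod.snd_add, map_add, ContinuousLinearMap.add_apply]
    linarith
  zero_mem' := by
    intro p hp
    simp
  smul_mem' := by
    intro c a ha p hp
    have h1 := ha p hp
    simp only [Prod.smul_fst, Prod.smul_snd, map_smul, ContinuousLinearMap.smul_apply,
      smul_eq_mul]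
    linear_combination c * h1

lemma selfCancelling_subset_vdash {A : Set (X × (X →L[ℝ] ℝ))}
    (hA : IsSelfCancelling A) : A ⊆ vdash A := by
  obtain ⟨⟨SA, rfl⟩, hflat⟩ := hA
  intro a ha p hp
  have h1 := hflat _ (SA.add_mem hp ha)
  have h2 := hflat _ hp
  have h3 := hflat _ ha
  simp only [Prod.fst_add, Prod.snd_add, map_add, ContinuousLinearMap.add_apply] at h1
  linarith

private lemma pair_translate (x y w : X × (X →L[ℝ] ℝ)) :
    ((x + w).2 - (y + w).2) ((x + w).1 - (y + w).1) = (x.2 - y.2) (x.1 - y.1) := by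
  simp only [Prod.fst_add, Prod.snd_add, add_sub_add_right_eq_sub]

end proofs

set_option maxHeartbeats 2000000

/-- In a reflexive real Banach space `X`, a maximal monotone `T : X ⇉ X*` is
non-enlargeable iff `T = A^⊢ + {(x, x*)}` for some self-cancelling `A` with `A^⊢`
maximal monotone and some `(x, x*) ∈ X × X*`. -/
theorem nonEnlargeable_iff_translate_of_vdash_selfCancelling {X : Type*}
    [NormedAddCommGroup X] [NormedSpace ℝ X] [CompleteSpace X]
    (hrefl : Function.Surjective (NormedSpace.inclusionInDoubleDual ℝ X))
    (T : Set (X × (X →L[ℝ] ℝ))) (hT : IsMaximalMonotone T) :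
    (∀ ε : ℝ, 0 ≤ ε → enlargement T ε = T) ↔
      ∃ (A : Set (X × (X →L[ℝ] ℝ))) (x : X) (xs : X →L[ℝ] ℝ),
        IsSelfCancelling A ∧ IsMaximalMonotone (vdash A) ∧
          T = (fun p => p + (x, xs)) '' vdash A := by
  constructor
  · intro hE
    -- T is nonempty
    have hne : ∃ w, w ∈ T := by
      by_contra hcon
      push_neg at hcon
      have hmono : IsMonotoneSet (insert ((0 : X), (0 : X →L[ℝ] ℝ)) T) := by
        intro p hp q hq
        rcases Set.mem_insert_iff.1 hp with hp' | hp'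
        · rcases Set.mem_insert_iff.1 hq with hq' | hq'
          · rw [hp', hq']; simp
          · exact absurd hq' (hcon q)
        · exact absurd hp' (hcon p)
      have he := hT.2 _ hmono (Set.subset_insert _ _)
      exact hcon _ (he ▸ Set.mem_insert _ _)
    obtain ⟨w, hw⟩ := hne
    set S : Set (X × (X →L[ℝ] ℝ)) := {p | p + w ∈ T} with hSdef
    have hS0 : (0 : X × (X →L[ℝ] ℝ)) ∈ S := by
      show (0 : X × (X →L[ℝ] ℝ)) + w ∈ T
      rw [zero_add]; exact hw
    have hTclosed : IsClosed T := isClosed_of_max hT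
    have hSclosed : IsClosed S := hTclosed.preimage (continuous_add_right w)
    have hSmid : ∀ x ∈ S, ∀ y ∈ S, (2⁻¹ : ℝ) • (x + y) ∈ S := by
      intro x hx y hy
      have h := midpoint_mem hT hE hx hy
      show (2⁻¹ : ℝ) • (x + y) + w ∈ T
      have e : (2⁻¹ : ℝ) • (x + y) + w = (2⁻¹ : ℝ) • ((x + w) + (y + w)) := by
        match_scalars <;> norm_num
      rw [e]; exact h
    have hSrefl : ∀ x ∈ S, ∀ y ∈ S, x + x - y ∈ S := by
      intro x hx y hy
      have h := reflect_mem hT hE hx hy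
      show x + x - y + w ∈ T
      have e : x + x - y + w = (x + w) + (x + w) - (y + w) := by abel
      rw [e]; exact h
    have hSneg : ∀ x ∈ S, -x ∈ S := by
      intro x hx
      have h := hSrefl 0 hS0 x hx
      have e : (0 : X × (X →L[ℝ] ℝ)) + 0 - x = -x := by abel
      rwa [e] at h
    have hSadd : ∀ x ∈ S, ∀ y ∈ S, x + y ∈ S := by
      intro x hx y hy
      have h := hSrefl _ (hSmid x hx y hy) 0 hS0
      have e : (2⁻¹ : ℝ) • (x + y) + (2⁻¹ : ℝ) • (x + y) - 0 = x + y := by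
        match_scalars <;> norm_num
      rwa [e] at h
    have hShalf : ∀ x ∈ S, (2⁻¹ : ℝ) • x ∈ S := by
      intro x hx
      have h := hSmid x hx 0 hS0
      rwa [add_zero] at h
    have hSsmul : ∀ (t : ℝ), ∀ x ∈ S, t • x ∈ S := by
      intro t x hx
      have hC : IsClosed {s : ℝ | s • x ∈ S} :=
        hSclosed.preimage (continuous_id.smul continuous_const)
      have hpow : ∀ n : ℕ, ((2 : ℝ) ^ n)⁻¹ • x ∈ S := by
        intro n
        induction n with
        | zero => simpa using hx
        | succ n ih =>
          have h := hShalf _ ih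
          rw [smul_smul] at h
          have e : (2 : ℝ)⁻¹ * ((2 : ℝ) ^ n)⁻¹ = ((2 : ℝ) ^ (n + 1))⁻¹ := by
            rw [pow_succ, mul_inv]
            ring
          rwa [e] at h
      have hzsmul : ∀ (k : ℤ), ∀ y ∈ S, k • y ∈ S := by
        intro k
        induction k using Int.induction_on with
        | zero => intro y hy; simpa using hS0
        | succ k ih =>
          intro y hy
          have h := hSadd _ (ih y hy) y hy
          have e : (k : ℤ) • y + y = ((k : ℤ) + 1) • y := by
            rw [add_zsmul, one_zsmul]
          rwa [e] at h
        | pred k ih =>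
          intro y hy
          have h := hSadd _ (ih y hy) _ (hSneg y hy)
          have e : (-k : ℤ) • y + -y = (-k - 1 : ℤ) • y := by
            rw [sub_zsmul, one_zsmul]
          rwa [e] at h
      have hdy : ∀ (k : ℤ) (n : ℕ), ((k : ℝ) / 2 ^ n) • x ∈ S := by
        intro k n
        have h := hzsmul k _ (hpow n)
        rwa [← Int.cast_smul_eq_zsmul ℝ, ← mul_smul, ← div_eq_mul_inv] at h
      have hcl : t ∈ closure {s : ℝ | s • x ∈ S} := by
        refine Metric.mem_closure_iff.2 (fun ε hε => ?_)
        obtain ⟨n, hn⟩ : ∃ n : ℕ, (2 : ℝ)⁻¹ ^ n < ε := exists_pow_lt_of_lt_one hε (by norm_num)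
        refine ⟨(⌊t * 2 ^ n⌋ : ℝ) / 2 ^ n, hdy _ n, ?_⟩
        have hp2 : (0 : ℝ) < 2 ^ n := by positivity
        have h1 : ((⌊t * 2 ^ n⌋ : ℝ)) ≤ t * 2 ^ n := Int.floor_le _
        have h2 : t * 2 ^ n < (⌊t * 2 ^ n⌋ : ℝ) + 1 := Int.lt_floor_add_one _
        have hn' : ((2 : ℝ) ^ n)⁻¹ < ε := by rwa [← inv_pow]
        have e1 : (⌊t * 2 ^ n⌋ : ℝ) / 2 ^ n ≤ t := by
          rw [div_le_iff₀ hp2]; exact h1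
        have e2 : t < ((⌊t * 2 ^ n⌋ : ℝ) + 1) / 2 ^ n := by
          rw [lt_div_iff₀ hp2]; exact h2
        have e3 : ((⌊t * 2 ^ n⌋ : ℝ) + 1) / 2 ^ n - (⌊t * 2 ^ n⌋ : ℝ) / 2 ^ n
            = ((2 : ℝ) ^ n)⁻¹ := by
          field_simp
          ring
        rw [Real.dist_eq, abs_sub_lt_iff]
        constructor
        · linarith
        · linarith
      have := hC.closure_eq ▸ hcl
      exact this
    -- monotonicity and maximality of S
    have hSmono : IsMonotoneSet S := by
      intro x hx y hy
      have h := hT.1 (x + w) hx (y + w) hy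
      rwa [pair_translate] at h
    have hSmax : IsMaximalMonotone S := by
      refine ⟨hSmono, ?_⟩
      intro S' hS' hSS'
      have hU : IsMonotoneSet {p : X × (X →L[ℝ] ℝ) | p - w ∈ S'} := by
        intro p hp q hq
        have h := hS' _ hp _ hq
        have e1 : (p - w).2 - (q - w).2 = p.2 - q.2 := by
          simp only [Prod.snd_sub, sub_sub_sub_cancel_right]
        have e2 : (p - w).1 - (q - w).1 = p.1 - q.1 := by
          simp only [Prod.fst_sub, sub_sub_sub_cancel_right]
        rwa [e1, e2] at h
      have hTU := hT.2 _ hU (fun p hp => by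
        show p - w ∈ S'
        apply hSS'
        show (p - w) + w ∈ T
        have e : p - w + w = p := by abel
        rwa [e])
      ext r
      constructor
      · intro hr
        show r + w ∈ T
        rw [← hTU]
        show (r + w) - w ∈ S'
        have e : r + w - w = r := by abel
        rwa [e]
      · intro hr; exact hSS' hr
    -- nonenlargeability of S
    have hSE : ∀ ε : ℝ, 0 ≤ ε → enlargement S ε = S := by
      intro ε hε
      ext r
      constructor
      · intro hr
        show r + w ∈ T
        rw [← hE ε hε]
        intro q hq
        have hq' : q - w ∈ S := by
          show (q - w) + w ∈ T
          have e : q - w + w = q := by abel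
          rwa [e]
        have h := hr _ hq'
        have e1 : (r + w).2 - q.2 = r.2 - (q - w).2 := by
          simp only [Prod.snd_add, Prod.snd_sub]; abel
        have e2 : (r + w).1 - q.1 = r.1 - (q - w).1 := by
          simp only [Prod.fst_add, Prod.fst_sub]; abel
        rw [e1, e2]; exact h
      · intro hr q hq
        have h := hSmono r hr q hq
        linarith
    -- vdash S ⊆ S
    have hq0 : ∀ y ∈ S, 0 ≤ y.2 y.1 := by
      intro y hy
      have h := hSmono y hy 0 hS0
      simpa using h
    have hpair : ∀ a ∈ vdash S, ∀ y ∈ S, (a.2 - y.2) (a.1 - y.1) = a.2 a.1 + y.2 y.1 := by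
      intro a ha y hy
      have h0 := ha y hy
      simp only [ContinuousLinearMap.sub_apply, map_sub]
      linarith
    have hAsub : vdash S ⊆ S := by
      intro a ha
      rcases le_or_gt 0 (a.2 a.1) with h | h
      · apply mem_of_related hSmax
        intro y hy
        rw [hpair a ha y hy]
        have := hq0 y hy
        linarith
      · have hmem : a ∈ enlargement S (-(a.2 a.1)) := by
          intro y hy
          rw [hpair a ha y hy]
          have := hq0 y hy
          linarith
        rwa [hSE _ (by linarith)] at hmem
    -- vdash (vdash S) = S
    have hconv : Convex ℝ S := by
      intro x hx y hy a b _ _ _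
      exact hSadd _ (hSsmul a x hx) _ (hSsmul b y hy)
    have hvv : vdash (vdash S) = S := by
      apply Set.Subset.antisymm
      · intro r hr
        by_contra hrS
        obtain ⟨f, u, hfu, hur⟩ := geometric_hahn_banach_closed_point hconv hSclosed hrS
        have hf0 : ∀ y ∈ S, f y = 0 := by
          intro y hy
          by_contra hfy
          have ht := hfu _ (hSsmul ((u + 1) / f y) y hy)
          rw [map_smul, smul_eq_mul, div_mul_cancel₀ _ hfy] at ht
          linarith
        have hu0 : 0 < u := by
          have h := hfu 0 hS0
          simpa using h
        obtain ⟨g, hg⟩ := hrefl (f.comp (ContinuousLinearMap.inr ℝ X (X →L[ℝ] ℝ)))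
        have hg' : ∀ φ : X →L[ℝ] ℝ, φ g = f ((0 : X), φ) := by
          intro φ
          have h := congrArg (fun Φ => Φ φ) hg
          simpa [NormedSpace.dual_def] using h
        set fX : X →L[ℝ] ℝ := f.comp (ContinuousLinearMap.inl ℝ X (X →L[ℝ] ℝ)) with hfX
        have hsplit : ∀ z : X × (X →L[ℝ] ℝ), z.2 g + fX z.1 = f z := by
          intro z
          have e : ((0 : X), z.2) + (z.1, (0 : X →L[ℝ] ℝ)) = z := by
            ext <;> simp
          rw [hg' z.2]
          show f ((0 : X), z.2) + f (z.1, (0 : X →L[ℝ] ℝ)) = f z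
          rw [← map_add, e]
        have hs0 : ((g, fX) : X × (X →L[ℝ] ℝ)) ∈ vdash S := by
          intro y hy
          show y.2 g + fX y.1 = 0
          rw [hsplit y]
          exact hf0 y hy
        have h := hr _ hs0
        -- h : fX r.1 + r.2 g = 0
        have h' : r.2 g + fX r.1 = f r := hsplit r
        have : f r = 0 := by
          show f r = 0
          rw [← h']
          linarith [h]
        linarith [hur, this, hu0]
      · intro y hy p hp
        have h := hp y hy
        linarith
    refine ⟨vdash S, w.1, w.2, ⟨⟨vdashSubmodule S, rfl⟩, ?_⟩, ?_, ?_⟩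
    · intro p hp
      have h := hp p (hAsub hp)
      linarith
    · show IsMaximalMonotone (vdash (vdash S))
      rw [hvv]; exact hSmax
    · show T = (fun p => p + (w.1, w.2)) '' vdash (vdash S)
      rw [hvv]
      ext p
      simp only [Set.mem_image]
      constructor
      · intro hpT
        refine ⟨p - w, ?_, ?_⟩
        · show (p - w) + w ∈ T
          have e : p - w + w = p := by abel
          rwa [e]
        · show p - w + (w.1, w.2) = p
          rw [Prod.mk.eta]
          abel
      · rintro ⟨s, hs, rfl⟩
        show s + (w.1, w.2) ∈ T
        rw [Prod.mk.eta]
        exact hs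
  · rintro ⟨A, x, xs, hA, hMmax, hTeq⟩ ε hε
    have hAsub : A ⊆ vdash A := selfCancelling_subset_vdash hA
    have hflat : ∀ p ∈ A, p.2 p.1 = 0 := hA.2
    apply Set.Subset.antisymm
    · intro r hr
      rw [hTeq]
      refine ⟨r - (x, xs), ?_, ?_⟩
      swap
      · show r - (x, xs) + (x, xs) = r
        abel
      intro p hp
      have key : p.2 (r.1 - x) + (r.2 - xs) p.1 = 0 := by
        by_contra hD
        set t : ℝ := ((r.2 - xs) (r.1 - x) + ε + 1) / (p.2 (r.1 - x) + (r.2 - xs) p.1)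
          with htdef
        have hy : t • p + (x, xs) ∈ T := by
          rw [hTeq]
          exact ⟨t • p, (vdashSubmodule A).smul_mem t (hAsub hp), rfl⟩
        have h := hr _ hy
        have hpp : p.2 p.1 = 0 := hflat p hp
        have hmul : t * (p.2 (r.1 - x) + (r.2 - xs) p.1)
            = (r.2 - xs) (r.1 - x) + ε + 1 := div_mul_cancel₀ _ hD
        simp only [Prod.fst_add, Prod.snd_add, Prod.smul_fst, Prod.smul_snd, map_sub, map_add,
          map_smul, ContinuousLinearMap.sub_apply, ContinuousLinearMap.add_apply,
          ContinuousLinearMap.smul_apply, smul_eq_mul, ge_iff_le] at h hmul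
        rw [hpp] at h
        ring_nf at h hmul
        linarith [h, hmul]
      show p.2 (r - (x, xs)).1 + (r - (x, xs)).2 p.1 = 0
      have e1 : (r - (x, xs)).1 = r.1 - x := rfl
      have e2 : (r - (x, xs)).2 = r.2 - xs := rfl
      rw [e1, e2]
      exact key
    · intro p hp q hq
      have h := hT.1 p hp q hq
      show (p.2 - q.2) (p.1 - q.1) ≥ -ε
      linarith
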